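/- Let X ∈ RV_{−α}(Y) on C = {x ∈ ℝ^d : ‖x‖_∞ ≥ 1}, i.e. the conditional law of X/t given ‖X‖_∞ ≥ t converges weakly to the law of Y on C, and assume Pr(bX_i ≥ t | ‖X‖_∞ ≥ t) → c_{bi} > 0 for each coordinate i and each sign b ∈ {−1, 1}. Then for every nonempty A ⊆ {1,…,d}, the sub-vector X_A is multivariate regularly varying on C^A = {x_A ∈ ℝ^{|A|} : ‖x_A‖_∞ ≥ 1} with index −α and limiting distribution equal to the conditional law of Y_A given ‖Y_A‖_∞ ≥ 1. -/

import Mathlib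

open Filter Topology MeasureTheory ProbabilityTheory

theorem marginals_regular_variation {d : ℕ} {Ω : Type*} [MeasurableSpace Ω]
    (P : Measure Ω) [IsProbabilityMeasure P] (α : ℝ) (hα : 0 < α)
    (X : Ω → (Fin d → ℝ)) (hX : Measurable X)
    (hpos : ∀ t : ℝ, 0 < P {ω | t ≤ ‖X ω‖})
    (ν : Measure (Fin d → ℝ)) [IsProbabilityMeasure ν]
    (hν_supp : ν {x | ‖x‖ < 1} = 0)
    (hν_hom : ∀ lam : ℝ, 1 ≤ lam → ∀ B : Set (Fin d → ℝ), MeasurableSet B →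
      B ⊆ {x | 1 ≤ ‖x‖} →
      ν ((fun x => lam • x) '' B) = ENNReal.ofReal (lam ^ (-α)) * ν B)
    (hconv : ∀ B : Set (Fin d → ℝ), MeasurableSet B → B ⊆ {x | 1 ≤ ‖x‖} →
      ν (frontier B) = 0 →
      Tendsto (fun t => (P {ω | t⁻¹ • X ω ∈ B}).toReal / (P {ω | t ≤ ‖X ω‖}).toReal)
        atTop (𝓝 (ν B).toReal))
    (hmarg : ∀ i : Fin d, ∀ b : ℝ, b = 1 ∨ b = -1 →
      ∃ c : ℝ, 0 < c ∧
        Tendsto (fun t => (P {ω | t ≤ b * X ω i ∧ t ≤ ‖X ω‖}).toReal /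
            (P {ω | t ≤ ‖X ω‖}).toReal) atTop (𝓝 c)) :
    ∀ A : Finset (Fin d), A.Nonempty →
      -- the limiting law of the sub-vector: `ν_A` conditioned on `‖·‖_∞ ≥ 1`
      ∀ B : Set (↥A → ℝ), MeasurableSet B →
        B ⊆ {x | 1 ≤ ‖x‖} →
        ((ν.map fun x (i : ↥A) => x i.1)[|{x | 1 ≤ ‖x‖}]) (frontier B) = 0 →
        Tendsto (fun t =>
            (P {ω | (t⁻¹ • fun i : ↥A => X ω i.1) ∈ B}).toReal /
            (P {ω | t ≤ ‖fun i : ↥A => X ω i.1‖}).toReal)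
          atTop
          (𝓝 ((((ν.map fun x (i : ↥A) => x i.1)[|{x | 1 ≤ ‖x‖}]) B).toReal)) := by
  intro A hA B hBmeas hBsub hBfront
  classical
  obtain ⟨i0, hi0⟩ := hA
  set π : (Fin d → ℝ) → (↥A → ℝ) := fun x i => x i.1 with hπdef
  have hπmeas : Measurable π := measurable_pi_lambda _ fun i => measurable_pi_apply _
  have hπcont : Continuous π := continuous_pi fun i => continuous_apply _
  have hπnorm : ∀ x : Fin d → ℝ, ‖π x‖ ≤ ‖x‖ := fun x =>
    (pi_norm_le_iff_of_nonneg (norm_nonneg x)).mpr fun i => norm_le_pi_norm x i.1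
  have hi0norm : ∀ x : Fin d → ℝ, x i0 ≤ ‖x‖ := fun x =>
    (le_abs_self _).trans (by simpa [Real.norm_eq_abs] using norm_le_pi_norm x i0)
  have hi0π : ∀ x : Fin d → ℝ, x i0 ≤ ‖π x‖ := fun x =>
    (le_abs_self _).trans (by simpa [Real.norm_eq_abs] using norm_le_pi_norm (π x) ⟨i0, hi0⟩)
  -- positivity of denominators
  have hcpos : ∀ t : ℝ, 0 < (P {ω | t ≤ ‖X ω‖}).toReal := fun t =>
    ENNReal.toReal_pos (hpos t).ne' (measure_ne_top P _)
  -- ν gives full mass to C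
  have hνC : ν {x : Fin d → ℝ | 1 ≤ ‖x‖} = 1 := by
    have hset : {x : Fin d → ℝ | 1 ≤ ‖x‖} = {x : Fin d → ℝ | ‖x‖ < 1}ᶜ := by
      ext x; simp [not_lt]
    rw [hset, measure_compl (measurableSet_lt continuous_norm.measurable measurable_const)
      (measure_ne_top ν _), hν_supp, measure_univ, tsub_zero]
  have hCmeas : ∀ lam : ℝ, MeasurableSet {x : Fin d → ℝ | lam ≤ ‖x‖} := fun lam =>
    measurableSet_le measurable_const continuous_norm.measurable
  -- image of C under scaling
  have himg : ∀ lam : ℝ, 0 < lam →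
      (fun x : Fin d → ℝ => lam • x) '' {x | 1 ≤ ‖x‖} = {x | lam ≤ ‖x‖} := by
    intro lam hlam
    ext x
    constructor
    · rintro ⟨y, hy, rfl⟩
      have h : ‖lam • y‖ = lam * ‖y‖ := by
        rw [norm_smul, Real.norm_eq_abs, abs_of_pos hlam]
      simp only [Set.mem_setOf_eq] at hy ⊢
      rw [h]; nlinarith
    · intro hx
      refine ⟨lam⁻¹ • x, ?_, ?_⟩
      · simp only [Set.mem_setOf_eq] at hx ⊢
        rw [norm_smul, Real.norm_eq_abs, abs_of_pos (inv_pos.mpr hlam),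
          le_inv_mul_iff₀ hlam, mul_one]
        exact hx
      · show lam • lam⁻¹ • x = x
        rw [smul_smul, mul_inv_cancel₀ hlam.ne', one_smul]
  have hClam : ∀ lam : ℝ, 1 ≤ lam → ν {x : Fin d → ℝ | lam ≤ ‖x‖} = ENNReal.ofReal (lam ^ (-α)) := by
    intro lam hlam
    have h := hν_hom lam hlam {x | 1 ≤ ‖x‖} (hCmeas 1) (fun x hx => hx)
    rw [himg lam (lt_of_lt_of_le one_pos hlam)] at h
    rw [h, hνC, mul_one]
  -- choose a good level lam
  obtain ⟨lam, hlamIoo, hlamgood⟩ : ∃ lam, lam ∈ Set.Ioo (1:ℝ) 2 \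
      ({t : ℝ | 0 < ν {x | x i0 = t}} ∪ {t : ℝ | 0 < ν {x : Fin d → ℝ | ‖x‖ = t}}) := by
    have hcnt : (({t : ℝ | 0 < ν {x | x i0 = t}} ∪
        {t : ℝ | 0 < ν {x : Fin d → ℝ | ‖x‖ = t}}) : Set ℝ).Countable :=
      (Measure.countable_meas_level_set_pos (μ := ν) (measurable_pi_apply i0)).union
        (Measure.countable_meas_level_set_pos (μ := ν) continuous_norm.measurable)
    have h1 : volume (Set.Ioo (1:ℝ) 2 \ ({t : ℝ | 0 < ν {x | x i0 = t}} ∪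
        {t : ℝ | 0 < ν {x : Fin d → ℝ | ‖x‖ = t}})) ≠ 0 := by
      rw [measure_diff_null (hcnt.measure_zero volume)]
      simp
    exact nonempty_of_measure_ne_zero h1
  obtain ⟨hlam1, hlam2⟩ := hlamIoo
  have hlampos : (0:ℝ) < lam := lt_trans one_pos hlam1
  have hatom1 : ν {x | x i0 = lam} = 0 := by
    by_contra h
    exact hlamgood (Or.inl (pos_iff_ne_zero.mpr h))
  have hatom2 : ν {x : Fin d → ℝ | ‖x‖ = lam} = 0 := by
    by_contra h
    exact hlamgood (Or.inr (pos_iff_ne_zero.mpr h))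
  -- marginal hypothesis for i0, b = 1
  obtain ⟨c, hc0, hcconv⟩ := hmarg i0 1 (Or.inl rfl)
  have hset1 : ∀ t : ℝ, {ω | t ≤ 1 * X ω i0 ∧ t ≤ ‖X ω‖} = {ω | t ≤ X ω i0} := by
    intro t; ext ω
    simp only [Set.mem_setOf_eq, one_mul]
    exact ⟨fun h => h.1, fun h => ⟨h, h.trans (hi0norm (X ω))⟩⟩
  have hcconv' : Tendsto (fun t => (P {ω | t ≤ X ω i0}).toReal /
      (P {ω | t ≤ ‖X ω‖}).toReal) atTop (𝓝 c) := by
    simpa only [hset1] using hcconv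
  have hmulT : Tendsto (fun t : ℝ => lam * t) atTop atTop :=
    tendsto_id.const_mul_atTop hlampos
  have h1 : Tendsto (fun t => (P {ω | lam * t ≤ X ω i0}).toReal /
      (P {ω | lam * t ≤ ‖X ω‖}).toReal) atTop (𝓝 c) := hcconv'.comp hmulT
  -- convergence for C_lam
  have hCfr : ν (frontier {x : Fin d → ℝ | lam ≤ ‖x‖}) = 0 := by
    refine measure_mono_null ?_ hatom2
    have : {x : Fin d → ℝ | lam ≤ ‖x‖} = (fun x : Fin d → ℝ => ‖x‖) ⁻¹' Set.Ici lam := rfl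
    rw [this]
    refine (continuous_norm.frontier_preimage_subset _).trans ?_
    rw [frontier_Ici]
    intro x hx; exact hx
  have h2 : Tendsto (fun t => (P {ω | lam * t ≤ ‖X ω‖}).toReal /
      (P {ω | t ≤ ‖X ω‖}).toReal) atTop (𝓝 (ν {x : Fin d → ℝ | lam ≤ ‖x‖}).toReal) := by
    refine (hconv {x | lam ≤ ‖x‖} (hCmeas lam) (fun x hx => le_trans hlam1.le hx) hCfr).congr' ?_
    filter_upwards [eventually_gt_atTop (0:ℝ)] with t ht
    have hset : {ω | lam ≤ ‖t⁻¹ • X ω‖} = {ω | lam * t ≤ ‖X ω‖} := by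
      ext ω
      simp only [Set.mem_setOf_eq]
      rw [norm_smul, Real.norm_eq_abs, abs_of_pos (inv_pos.mpr ht), le_inv_mul_iff₀ ht,
        mul_comm]
    rw [hset]
  -- convergence for S_lam
  have hSfr : ν (frontier {x : Fin d → ℝ | lam ≤ x i0}) = 0 := by
    refine measure_mono_null ?_ hatom1
    have : {x : Fin d → ℝ | lam ≤ x i0} = (fun x : Fin d → ℝ => x i0) ⁻¹' Set.Ici lam := rfl
    rw [this]
    refine ((continuous_apply i0).frontier_preimage_subset _).trans ?_
    rw [frontier_Ici]
    intro x hx; exact hx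
  have h3 : Tendsto (fun t => (P {ω | lam * t ≤ X ω i0}).toReal /
      (P {ω | t ≤ ‖X ω‖}).toReal) atTop (𝓝 (ν {x : Fin d → ℝ | lam ≤ x i0}).toReal) := by
    refine (hconv {x | lam ≤ x i0}
      (measurableSet_le measurable_const (measurable_pi_apply i0))
      (fun x hx => le_trans (le_trans hlam1.le hx) (hi0norm x)) hSfr).congr' ?_
    filter_upwards [eventually_gt_atTop (0:ℝ)] with t ht
    have hset : {ω | lam ≤ (t⁻¹ • X ω) i0} = {ω | lam * t ≤ X ω i0} := by
      ext ω
      simp only [Set.mem_setOf_eq, Pi.smul_apply, smul_eq_mul]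
      rw [le_inv_mul_iff₀ ht, mul_comm]
    rw [hset]
  -- hence ν S_lam = c * ν C_lam > 0
  have h4 : Tendsto (fun t => (P {ω | lam * t ≤ X ω i0}).toReal /
      (P {ω | t ≤ ‖X ω‖}).toReal) atTop
      (𝓝 (c * (ν {x : Fin d → ℝ | lam ≤ ‖x‖}).toReal)) := by
    refine (h1.mul h2).congr fun t => ?_
    rw [div_mul_div_comm, mul_comm (P {ω | lam * t ≤ ‖X ω‖}).toReal,
      mul_div_mul_right _ _ (hcpos (lam * t)).ne']
  have hSval : (ν {x : Fin d → ℝ | lam ≤ x i0}).toReal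
      = c * (ν {x : Fin d → ℝ | lam ≤ ‖x‖}).toReal := tendsto_nhds_unique h3 h4
  have hSpos : 0 < (ν {x : Fin d → ℝ | lam ≤ x i0}).toReal := by
    rw [hSval, hClam lam hlam1.le, ENNReal.toReal_ofReal (Real.rpow_pos_of_pos hlampos _).le]
    exact mul_pos hc0 (Real.rpow_pos_of_pos hlampos _)
  -- the sub-vector norm set D
  set D : Set (Fin d → ℝ) := {x | 1 ≤ ‖π x‖} with hDdef
  have hDmeas : MeasurableSet D :=
    measurableSet_le measurable_const (continuous_norm.comp hπcont).measurable
  have hDsub : D ⊆ {x : Fin d → ℝ | 1 ≤ ‖x‖} := fun x hx => le_trans hx (hπnorm x)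
  have hDpos : 0 < ν D := by
    have hsub : {x : Fin d → ℝ | lam ≤ x i0} ⊆ D := fun x hx =>
      le_trans hlam1.le (le_trans hx (hi0π x))
    exact lt_of_lt_of_le (ENNReal.toReal_pos_iff.mp hSpos).1 (measure_mono hsub)
  -- level set of the sub-norm is null
  have hE0 : ν ({x : Fin d → ℝ | ‖π x‖ = 1} ∩ {x : Fin d → ℝ | 1 ≤ ‖x‖}) = 0 := by
    by_contra hne
    set E := {x : Fin d → ℝ | ‖π x‖ = 1} ∩ {x : Fin d → ℝ | 1 ≤ ‖x‖} with hEdef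
    have hEmeas : MeasurableSet E :=
      (measurableSet_eq_fun (continuous_norm.comp hπcont).measurable measurable_const).inter
        (hCmeas 1)
    have hEsub : E ⊆ {x : Fin d → ℝ | 1 ≤ ‖x‖} := Set.inter_subset_right
    set g : ℕ → ℝ := fun n => 1 + ((n : ℝ) + 1)⁻¹ with hgdef
    have hgpos : ∀ n : ℕ, (0:ℝ) < (n : ℝ) + 1 := fun n => by positivity
    have hg1 : ∀ n, 1 ≤ g n := fun n => le_add_of_nonneg_right (by positivity)
    have hg2 : ∀ n, g n ≤ 2 := by
      intro n
      have h1 : ((n : ℝ) + 1)⁻¹ * ((n : ℝ) + 1) = 1 := inv_mul_cancel₀ (hgpos n).ne'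
      have h2 : (0:ℝ) ≤ ((n : ℝ) + 1)⁻¹ := inv_nonneg.mpr (hgpos n).le
      have h3 : (1:ℝ) ≤ (n : ℝ) + 1 := by
        have := Nat.cast_nonneg (α := ℝ) n
        linarith
      have h4 : ((n : ℝ) + 1)⁻¹ ≤ 1 := by nlinarith
      simp only [hgdef]
      linarith
    have hginj : Function.Injective g := by
      intro m n h
      simp only [hgdef] at h
      have h' : ((m : ℝ) + 1)⁻¹ = ((n : ℝ) + 1)⁻¹ := by linarith
      have h'' : ((m : ℝ) + 1) = ((n : ℝ) + 1) := inv_injective h'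
      exact_mod_cast add_left_injective 1 h''
    have himgE : ∀ n, (fun x : Fin d → ℝ => g n • x) '' E
        = {x : Fin d → ℝ | ‖π x‖ = g n} ∩ {x : Fin d → ℝ | g n ≤ ‖x‖} := by
      intro n
      have hpos' : (0:ℝ) < g n := lt_of_lt_of_le one_pos (hg1 n)
      ext x
      constructor
      · rintro ⟨y, ⟨hy1, hy2⟩, rfl⟩
        simp only [Set.mem_setOf_eq] at hy1 hy2
        constructor
        · show ‖π (g n • y)‖ = g n
          have hπs : π (g n • y) = g n • π y := rfl
          rw [hπs, norm_smul, Real.norm_eq_abs, abs_of_pos hpos', hy1, mul_one]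
        · show g n ≤ ‖g n • y‖
          rw [norm_smul, Real.norm_eq_abs, abs_of_pos hpos']
          nlinarith
      · rintro ⟨hx1, hx2⟩
        simp only [Set.mem_setOf_eq] at hx1 hx2
        refine ⟨(g n)⁻¹ • x, ⟨?_, ?_⟩, ?_⟩
        · show ‖π ((g n)⁻¹ • x)‖ = 1
          have hπs : π ((g n)⁻¹ • x) = (g n)⁻¹ • π x := rfl
          rw [hπs, norm_smul, Real.norm_eq_abs, abs_of_pos (inv_pos.mpr hpos'), hx1,
            inv_mul_cancel₀ hpos'.ne']
        · show (1:ℝ) ≤ ‖(g n)⁻¹ • x‖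
          rw [norm_smul, Real.norm_eq_abs, abs_of_pos (inv_pos.mpr hpos'),
            le_inv_mul_iff₀ hpos', mul_one]
          exact hx2
        · show g n • (g n)⁻¹ • x = x
          rw [smul_smul, mul_inv_cancel₀ hpos'.ne', one_smul]
    have hFmeas : ∀ n, MeasurableSet ({x : Fin d → ℝ | ‖π x‖ = g n} ∩ {x : Fin d → ℝ | g n ≤ ‖x‖}) :=
      fun n => (measurableSet_eq_fun (continuous_norm.comp hπcont).measurable
        measurable_const).inter (hCmeas (g n))
    have hFdisj : Pairwise (Function.onFun Disjoint fun n =>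
        {x : Fin d → ℝ | ‖π x‖ = g n} ∩ {x : Fin d → ℝ | g n ≤ ‖x‖}) := by
      intro m n hmn
      refine Set.disjoint_left.mpr fun x hxm hxn => ?_
      exact hmn (hginj (hxm.1.symm.trans hxn.1))
    have hFval : ∀ n, ν ({x : Fin d → ℝ | ‖π x‖ = g n} ∩ {x : Fin d → ℝ | g n ≤ ‖x‖})
        = ENNReal.ofReal ((g n) ^ (-α)) * ν E := by
      intro n
      rw [← himgE n]
      exact hν_hom (g n) (hg1 n) E hEmeas hEsub
    have hδ : ∀ n, ENNReal.ofReal ((2:ℝ) ^ (-α)) * ν E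
        ≤ ν ({x : Fin d → ℝ | ‖π x‖ = g n} ∩ {x : Fin d → ℝ | g n ≤ ‖x‖}) := by
      intro n
      rw [hFval n]
      refine mul_le_mul_left (ENNReal.ofReal_le_ofReal ?_) _
      exact Real.rpow_le_rpow_of_nonpos (lt_of_lt_of_le one_pos (hg1 n)) (hg2 n)
        (neg_nonpos.mpr hα.le)
    have hsum : ν (⋃ n, {x : Fin d → ℝ | ‖π x‖ = g n} ∩ {x : Fin d → ℝ | g n ≤ ‖x‖}) = ⊤ := by
      rw [measure_iUnion hFdisj hFmeas]
      refine top_le_iff.mp ?_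
      have hne0 : ENNReal.ofReal ((2:ℝ) ^ (-α)) * ν E ≠ 0 :=
        mul_ne_zero (ENNReal.ofReal_pos.mpr (Real.rpow_pos_of_pos two_pos _)).ne' hne
      calc (⊤:ENNReal) = ∑' _ : ℕ, ENNReal.ofReal ((2:ℝ) ^ (-α)) * ν E :=
            (ENNReal.tsum_const_eq_top_of_ne_zero hne0).symm
        _ ≤ _ := ENNReal.tsum_le_tsum hδ
    exact (measure_ne_top ν _) hsum
  -- frontier of D is null
  have hDfr : ν (frontier D) = 0 := by
    have h1 : frontier D ⊆ {x : Fin d → ℝ | ‖π x‖ = 1} := by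
      have hDeq : D = (fun x : Fin d → ℝ => ‖π x‖) ⁻¹' Set.Ici 1 := rfl
      rw [hDeq]
      refine ((continuous_norm.comp hπcont).frontier_preimage_subset _).trans ?_
      rw [frontier_Ici]
      intro x hx; exact hx
    have h2 : ν (({x : Fin d → ℝ | ‖π x‖ = 1} ∩ {x : Fin d → ℝ | 1 ≤ ‖x‖})
        ∪ {x : Fin d → ℝ | ‖x‖ < 1}) = 0 := measure_union_null hE0 hν_supp
    refine measure_mono_null (fun x hx => ?_) h2
    rcases le_or_gt 1 ‖x‖ with h | h
    · exact Or.inl ⟨h1 hx, h⟩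
    · exact Or.inr h
  -- denominator convergence
  have hden : Tendsto (fun t => (P {ω | t ≤ ‖fun i : ↥A => X ω i.1‖}).toReal /
      (P {ω | t ≤ ‖X ω‖}).toReal) atTop (𝓝 (ν D).toReal) := by
    refine (hconv D hDmeas hDsub hDfr).congr' ?_
    filter_upwards [eventually_gt_atTop (0:ℝ)] with t ht
    have hset : {ω | t⁻¹ • X ω ∈ D} = {ω | t ≤ ‖fun i : ↥A => X ω i.1‖} := by
      ext ω
      show 1 ≤ ‖π (t⁻¹ • X ω)‖ ↔ t ≤ ‖fun i : ↥A => X ω i.1‖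
      have hππ : π (t⁻¹ • X ω) = t⁻¹ • π (X ω) := rfl
      rw [hππ, norm_smul, Real.norm_eq_abs, abs_of_pos (inv_pos.mpr ht),
        le_inv_mul_iff₀ ht, mul_one]
    rw [hset]
  -- numerator convergence
  have hB'meas : MeasurableSet (π ⁻¹' B) := hπmeas hBmeas
  have hB'sub : π ⁻¹' B ⊆ {x : Fin d → ℝ | 1 ≤ ‖x‖} :=
    fun x hx => le_trans (hBsub hx) (hπnorm x)
  have hD'closed : IsClosed {y : ↥A → ℝ | 1 ≤ ‖y‖} :=
    isClosed_le continuous_const continuous_norm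
  have hD'meas : MeasurableSet {y : ↥A → ℝ | 1 ≤ ‖y‖} := hD'closed.measurableSet
  have hBfrsub : frontier B ⊆ {y : ↥A → ℝ | 1 ≤ ‖y‖} :=
    frontier_subset_closure.trans (closure_minimal hBsub hD'closed)
  have hmapD' : (ν.map π) {y : ↥A → ℝ | 1 ≤ ‖y‖} = ν D := by
    rw [Measure.map_apply hπmeas hD'meas]
    rfl
  have hmapfr : (ν.map π) (frontier B) = 0 := by
    rw [cond_apply hD'meas] at hBfront
    rcases mul_eq_zero.mp hBfront with h | h
    · exfalso
      rw [ENNReal.inv_eq_zero, hmapD'] at h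
      exact (measure_ne_top ν D) h
    · rwa [Set.inter_eq_self_of_subset_right hBfrsub] at h
  have hB'fr : ν (frontier (π ⁻¹' B)) = 0 := by
    refine measure_mono_null (hπcont.frontier_preimage_subset B) ?_
    rw [← Measure.map_apply hπmeas isClosed_frontier.measurableSet]
    exact hmapfr
  have hnum : Tendsto (fun t => (P {ω | (t⁻¹ • fun i : ↥A => X ω i.1) ∈ B}).toReal /
      (P {ω | t ≤ ‖X ω‖}).toReal) atTop (𝓝 (ν (π ⁻¹' B)).toReal) := by
    refine (hconv (π ⁻¹' B) hB'meas hB'sub hB'fr).congr fun t => ?_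
    rfl
  -- identify the limit
  have hmapB : (ν.map π) B = ν (π ⁻¹' B) := Measure.map_apply hπmeas hBmeas
  have hνD0 : (ν D).toReal ≠ 0 := (ENNReal.toReal_pos hDpos.ne' (measure_ne_top ν D)).ne'
  have heq : (((ν.map π)[|{x : ↥A → ℝ | 1 ≤ ‖x‖}]) B).toReal
      = (ν (π ⁻¹' B)).toReal / (ν D).toReal := by
    rw [cond_apply hD'meas, hmapD', Set.inter_eq_self_of_subset_right hBsub, hmapB,
      ENNReal.toReal_mul, ENNReal.toReal_inv, inv_mul_eq_div]
  rw [heq]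
  have halg : ∀ a b cc : ℝ, cc ≠ 0 → a / cc / (b / cc) = a / b := by
    intro a b cc hcc
    rcases eq_or_ne b 0 with rfl | hb
    · rw [zero_div, div_zero, div_zero]
    · field_simp
  exact (hnum.div hden hνD0).congr fun t => halg _ _ _ (hcpos t).ne'
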